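/- If f ∈ C₀(D) is non-zero, then there exists a maximal s ∈ Λ subject to the condition that |f(s,i)| = ‖f‖_∞ for some i ∈ {1,−1}. -/

import Mathlib

/-- An element of Kurepa's tree `Λ`: an injective function `t : α → ω` with countable
ordinal domain `α` and coinfinite range.  The function is represented as a total function
on ordinals which takes the junk value `0` outside of the domain. -/
structure Lambda : Type 1 where
  toFun : Ordinal.{0} → ℕ
  dom : Ordinal.{0}
  countable : dom.card ≤ Cardinal.aleph0
  inj : ∀ β γ, β < dom → γ < dom → toFun β = toFun γ → β = γ
  coinfinite : {n : ℕ | ∀ β, β < dom → toFun β ≠ n}.Infinite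
  junk : ∀ β, ¬ β < dom → toFun β = 0

/-- The tree order on `Λ`: `s ≼ t` iff `t` extends `s`. -/
def Lambda.le (s t : Lambda) : Prop :=
  s.dom ≤ t.dom ∧ ∀ β, β < s.dom → s.toFun β = t.toFun β

/-- The strict tree order on `Λ`. -/
def Lambda.lt (s t : Lambda) : Prop := Lambda.le s t ∧ s ≠ t

/-- `r ≺ s` for `r ∈ Λ ∪ {0}` (`none` plays the role of the extra least element `0`). -/
def precLt : Option Lambda → Lambda → Prop
  | none, _ => True
  | some r, s => Lambda.lt r s

/-- The interval `(r, t] = {s ∈ Λ : r ≺ s ≼ t}`, with `r ∈ Λ ∪ {0}`. -/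
def lamIoc (r : Option Lambda) (t : Lambda) : Set Lambda :=
  {s | precLt r s ∧ Lambda.le s t}

/-- The position of the minimum of `t` on the ordinal interval `[δ, β)`. -/
noncomputable def minPos (t : Ordinal.{0} → ℕ) (δ β : Ordinal.{0}) : Ordinal.{0} :=
  sInf {ξ | δ ≤ ξ ∧ ξ < β ∧ ∀ η, δ ≤ η → η < β → t ξ ≤ t η}

lemma minPos_lt (t : Ordinal.{0} → ℕ) {δ β : Ordinal.{0}} (h : δ < β) : minPos t δ β < β := by
  have hne : {ξ : Ordinal.{0} | δ ≤ ξ ∧ ξ < β ∧ ∀ η, δ ≤ η → η < β → t ξ ≤ t η}.Nonempty := by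
    have h1 : {n : ℕ | ∃ ξ : Ordinal.{0}, δ ≤ ξ ∧ ξ < β ∧ t ξ = n}.Nonempty :=
      ⟨t δ, δ, le_refl _, h, rfl⟩
    obtain ⟨ξ, hξ1, hξ2, hξ3⟩ := Nat.sInf_mem h1
    refine ⟨ξ, hξ1, hξ2, fun η h1' h2' => ?_⟩
    rw [hξ3]
    exact Nat.sInf_le ⟨η, h1', h2', rfl⟩
  obtain ⟨ξ, hξ⟩ := hne
  calc minPos t δ β ≤ ξ := csInf_le (OrderBot.bddBelow _) hξ
    _ < β := hξ.2.1

/-- The sequence `τ` computed from the starting ordinal `β₀` downwards: `τ` is obtained by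
repeatedly passing from `β` to the position of the minimum of `t` on `[δ, β)`, stopping upon
reaching `δ`.  The resulting finite sequence `(β_k, …, β_1)` is recorded as a list in the
order `[β_k, …, β_1]` (so concatenation of the lists corresponds to `⌢`). -/
noncomputable def tauFrom (δ : Ordinal.{0}) (t : Ordinal.{0} → ℕ) : Ordinal.{0} → List Ordinal.{0} :=
  WellFounded.fix wellFounded_lt
    (fun β IH => if h : δ < β then IH (minPos t δ β) (minPos_lt t h) ++ [minPos t δ β] else [])

/-- The finite sequence `τ(s,t)` of ordinals, for `s ≼ t` in `Λ`. -/
noncomputable def tau (s t : Lambda) : List Ordinal.{0} :=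
  tauFrom s.dom t.toFun t.dom

/-- `ℓ(s,t)`, the length of `τ(s,t)`. -/
noncomputable def ell (s t : Lambda) : ℕ := (tau s t).length

/-- The underlying set of the `Λ`-duplicate: `D = Λ × {1, -1}`. -/
abbrev Dup : Type 1 := Lambda × ℤˣ

/-- The basic open sets `W(r,t,i)` of the `Λ`-duplicate. -/
noncomputable def Wset (r : Option Lambda) (t : Lambda) (i : ℤˣ) : Set Dup :=
  {q | q.1 ∈ lamIoc r t ∧ q.2 = (-1) ^ ell q.1 t * i}

/-- The collection of all basic open sets `W(r,t,i)` with `r ≺ t`. -/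
noncomputable def WBasis : Set (Set Dup) :=
  {S | ∃ (r : Option Lambda) (t : Lambda) (i : ℤˣ), precLt r t ∧ S = Wset r t i}

/-- The topology of the `Λ`-duplicate, generated by the basic sets `W(r,t,i)`. -/
noncomputable instance : TopologicalSpace Dup := TopologicalSpace.generateFrom WBasis


/-! ### Auxiliary lemmas -/

lemma Lambda.le_refl (s : Lambda) : Lambda.le s s := ⟨le_rfl, fun _ _ => rfl⟩

lemma Lambda.le_trans {s t u : Lambda} (h1 : Lambda.le s t) (h2 : Lambda.le t u) :
    Lambda.le s u :=
  ⟨h1.1.trans h2.1, fun β hβ => (h1.2 β hβ).trans (h2.2 β (lt_of_lt_of_le hβ h1.1))⟩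

lemma Lambda.ext' {s t : Lambda} (h1 : s.toFun = t.toFun) (h2 : s.dom = t.dom) : s = t := by
  cases s; cases t; simp_all

lemma Lambda.le_antisymm {s t : Lambda} (h1 : Lambda.le s t) (h2 : Lambda.le t s) : s = t := by
  have hd : s.dom = t.dom := _root_.le_antisymm h1.1 h2.1
  refine Lambda.ext' (funext fun β => ?_) hd
  by_cases hβ : β < s.dom
  · exact h1.2 β hβ
  · rw [s.junk β hβ, t.junk β (hd ▸ hβ)]

lemma tauFrom_self (δ : Ordinal.{0}) (t : Ordinal.{0} → ℕ) : tauFrom δ t δ = [] := by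
  rw [tauFrom, WellFounded.fix_eq]
  simp

lemma ell_self (t : Lambda) : ell t t = 0 := by
  rw [ell, tau, tauFrom_self]
  rfl

lemma mem_Wset_self (t : Lambda) (i : ℤˣ) : (t, i) ∈ Wset none t i := by
  refine ⟨⟨trivial, Lambda.le_refl t⟩, ?_⟩
  simp [ell_self]

lemma isOpen_Wset_none (t : Lambda) (i : ℤˣ) : IsOpen (Wset none t i) :=
  TopologicalSpace.isOpen_generateFrom_of_mem ⟨none, t, i, trivial, rfl⟩

lemma Wset_none_le {t : Lambda} {i : ℤˣ} {q : Dup} (hq : q ∈ Wset none t i) :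
    Lambda.le q.1 t := hq.1.2

lemma norm_apply_le (f : ZeroAtInftyContinuousMap Dup ℝ) (x : Dup) : ‖f x‖ ≤ ‖f‖ :=
  f.toBCF.norm_coe_le_norm x

/-- The norm of a non-zero `f ∈ C₀(D)` is attained. -/
lemma exists_norm_attained (f : ZeroAtInftyContinuousMap Dup ℝ) (hf : f ≠ 0) :
    ∃ x : Dup, ‖f x‖ = ‖f‖ := by
  have hpos : 0 < ‖f‖ := norm_pos_iff.mpr hf
  set ε := ‖f‖ / 2 with hε
  have hεpos : 0 < ε := by positivity
  have hεlt : ε < ‖f‖ := by rw [hε]; linarith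
  -- the set where `‖f‖ ≥ ε` is compact
  set K : Set Dup := {x | ε ≤ ‖f x‖} with hK
  have hKclosed : IsClosed K := by
    have : K = (fun x => ‖f x‖) ⁻¹' Set.Ici ε := rfl
    rw [this]
    exact IsClosed.preimage ((map_continuous f).norm) isClosed_Ici
  have hKcompact : IsCompact K := by
    have h1 : Filter.Tendsto (⇑f) (Filter.cocompact Dup) (nhds 0) := zero_at_infty f
    have h2 : {x : Dup | ‖f x‖ < ε} ∈ Filter.cocompact Dup := by
      have := h1 (Metric.ball_mem_nhds (0 : ℝ) hεpos)
      filter_upwards [this] with x hx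
      simpa [Real.norm_eq_abs, abs_sub_comm] using hx
    obtain ⟨t, htc, hts⟩ := Filter.hasBasis_cocompact.mem_iff.mp h2
    refine htc.of_isClosed_subset hKclosed ?_
    intro x hx
    by_contra hxt
    have h3 : ‖f x‖ < _ := hts hxt
    exact absurd h3 (not_lt.mpr hx)
  have hKne : K.Nonempty := by
    by_contra h
    rw [Set.not_nonempty_iff_eq_empty] at h
    have : ‖f‖ ≤ ε := by
      rw [← ZeroAtInftyContinuousMap.norm_toBCF_eq_norm]
      refine (BoundedContinuousFunction.norm_le hεpos.le).mpr fun x => le_of_lt ?_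
      by_contra hx
      exact absurd (Set.eq_empty_iff_forall_notMem.mp h x) (by simpa [hK] using not_lt.mp hx)
    linarith
  obtain ⟨x₀, hx₀K, hx₀max⟩ :=
    hKcompact.exists_isMaxOn hKne ((map_continuous f).norm).continuousOn
  refine ⟨x₀, le_antisymm (norm_apply_le f x₀) ?_⟩
  rw [← ZeroAtInftyContinuousMap.norm_toBCF_eq_norm]
  refine (BoundedContinuousFunction.norm_le ((norm_nonneg _))).mpr fun y => ?_
  by_cases hy : y ∈ K
  · exact hx₀max hy
  · simp only [hK, Set.mem_setOf_eq, not_le] at hy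
    calc ‖f y‖ ≤ ε := hy.le
      _ ≤ ‖f x₀‖ := hx₀K

/-- If `f ∈ C₀(D)` is non-zero, there is a maximal `s ∈ Λ` subject to
`|f(s,i)| = ‖f‖∞` for some `i ∈ {1,-1}`. -/
theorem exists_maximal_norm_attaining (f : ZeroAtInftyContinuousMap Dup ℝ) (hf : f ≠ 0) :
    ∃ s : Lambda, (∃ i : ℤˣ, |f (s, i)| = ‖f‖) ∧
      ∀ s' : Lambda, (∃ i : ℤˣ, |f (s', i)| = ‖f‖) → ¬ Lambda.lt s s' := by
  classical
  -- the set where the norm is attained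
  set A : Set Lambda := {s | ∃ i : ℤˣ, |f (s, i)| = ‖f‖} with hA
  -- the compact set of points where `|f| ≥ ‖f‖`
  set K : Set Dup := {x | ‖f‖ ≤ ‖f x‖} with hK
  have hKclosed : IsClosed K := by
    have : K = (fun x => ‖f x‖) ⁻¹' Set.Ici ‖f‖ := rfl
    rw [this]
    exact IsClosed.preimage ((map_continuous f).norm) isClosed_Ici
  have hpos : 0 < ‖f‖ := norm_pos_iff.mpr hf
  have hKcompact : IsCompact K := by
    have h1 : Filter.Tendsto (⇑f) (Filter.cocompact Dup) (nhds 0) := zero_at_infty f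
    have h2 : {x : Dup | ‖f x‖ < ‖f‖} ∈ Filter.cocompact Dup := by
      have := h1 (Metric.ball_mem_nhds (0 : ℝ) hpos)
      filter_upwards [this] with x hx
      simpa [Real.norm_eq_abs, abs_sub_comm] using hx
    obtain ⟨t, htc, hts⟩ := Filter.hasBasis_cocompact.mem_iff.mp h2
    refine htc.of_isClosed_subset hKclosed ?_
    intro x hx
    by_contra hxt
    have h3 : ‖f x‖ < _ := hts hxt
    exact absurd h3 (not_lt.mpr hx)
  have hKA : ∀ x : Dup, x ∈ K → x.1 ∈ A := by
    rintro ⟨s, i⟩ hx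
    refine ⟨i, ?_⟩
    rw [← Real.norm_eq_abs]
    exact le_antisymm (norm_apply_le f _) hx
  have hAK : ∀ s ∈ A, ∃ i : ℤˣ, (s, i) ∈ K := by
    rintro s ⟨i, hi⟩
    refine ⟨i, ?_⟩
    show ‖f‖ ≤ ‖f (s, i)‖
    rw [Real.norm_eq_abs, hi]
  -- A is nonempty
  obtain ⟨x₀, hx₀⟩ := exists_norm_attained f hf
  have hs₀ : x₀.1 ∈ A := hKA x₀ (le_of_eq hx₀.symm)
  -- Zorn's lemma on the subtype of A
  have hzorn := exists_maximal_of_chains_bounded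
    (r := fun a b : {s : Lambda // s ∈ A} => Lambda.le a.1 b.1)
    (fun c hc => ?_) (fun {a b c} h1 h2 => Lambda.le_trans h1 h2)
  · obtain ⟨m, hm⟩ := hzorn
    refine ⟨m.1, m.2, fun s' hs' hlt => ?_⟩
    have := hm ⟨s', hs'⟩ hlt.1
    exact hlt.2 (Lambda.le_antisymm hlt.1 this)
  -- every chain is bounded
  · rcases Set.eq_empty_or_nonempty c with hce | hcne
    · exact ⟨⟨x₀.1, hs₀⟩, by simp [hce]⟩
    -- choose a witness sign for every element of A
    haveI := hcne.to_subtype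
    haveI : Nonempty Dup := ⟨x₀⟩
    haveI : IsRefl {s : Lambda // s ∈ A} (fun a b => Lambda.le a.1 b.1) :=
      ⟨fun a => Lambda.le_refl a.1⟩
    set g : {s : Lambda // s ∈ A} → ℤˣ := fun a => a.2.choose with hg
    have hgspec : ∀ a : {s : Lambda // s ∈ A}, |f (a.1, g a)| = ‖f‖ := fun a => a.2.choose_spec
    -- tail sets of the chain
    set T : c → Set Dup :=
      fun a => (fun b : c => ((b : {s : Lambda // s ∈ A}).1, g b)) ''
        {b : c | Lambda.le (a : {s : Lambda // s ∈ A}).1 (b : {s : Lambda // s ∈ A}).1} with hT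
    set F : Filter Dup := ⨅ (a : c), Filter.principal (T a) with hF
    have hTne : ∀ a : c, (T a).Nonempty :=
      fun a => ⟨_, ⟨a, Lambda.le_refl _, rfl⟩⟩
    have hdir : Directed (· ≥ ·) fun a : c => Filter.principal (T a) := by
      intro a b
      rcases eq_or_ne a b with rfl | hab
      · exact ⟨a, le_rfl, le_rfl⟩
      have hab' : (a : {s : Lambda // s ∈ A}) ≠ b := fun h => hab (Subtype.ext h)
      rcases hc.total a.2 b.2 with h | h
      · exact ⟨b, Filter.principal_mono.mpr
          (fun x ⟨u, hu, hx⟩ => ⟨u, Lambda.le_trans h hu, hx⟩), le_rfl⟩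
      · exact ⟨a, le_rfl, Filter.principal_mono.mpr
          (fun x ⟨u, hu, hx⟩ => ⟨u, Lambda.le_trans h hu, hx⟩)⟩
    have hFneBot : F.NeBot := Filter.iInf_neBot_of_directed hdir
      (fun a => Filter.principal_neBot_iff.mpr (hTne a))
    have hFK : F ≤ Filter.principal K := by
      obtain ⟨a₀, ha₀⟩ := hcne
      refine le_trans (iInf_le _ ⟨a₀, ha₀⟩) (Filter.principal_mono.mpr ?_)
      rintro x ⟨b, _, rfl⟩
      have hb := hgspec b
      rw [← Real.norm_eq_abs] at hb
      exact hb.ge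
    obtain ⟨p, hpK, hpcl⟩ := hKcompact.exists_clusterPt hFK
    obtain ⟨t, i⟩ := p
    -- t is an upper bound of the chain
    refine ⟨⟨t, hKA (t, i) hpK⟩, fun a hac => ?_⟩
    have hW : Wset none t i ∈ nhds (t, i) :=
      (isOpen_Wset_none t i).mem_nhds (mem_Wset_self t i)
    have hTa : T ⟨a, hac⟩ ∈ F := Filter.mem_iInf_of_mem ⟨a, hac⟩ (Filter.mem_principal_self _)
    obtain ⟨q, hqW, hqT⟩ := clusterPt_iff_nonempty.mp hpcl hW hTa
    obtain ⟨b, hab, rfl⟩ := hqT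
    exact Lambda.le_trans hab (Wset_none_le hqW)
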